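/- For complex y, z with |y| < 1, |z| < 1: ∑ over pairs (a,b) with 0 ≤ a < b, gcd(a,b) = 1 of (1/b)·(−log(1 − y^a z^b)) equals (1/(1−y))·log((1−yz)/(1−z)). -/

import Mathlib

open Complex

private lemma vpv_re_pos {w : ℂ} (hw : ‖w‖ < 1) : 0 < (1 - w).re := by
  have h1 : w.re ≤ ‖w‖ := Complex.re_le_norm w
  simp only [Complex.sub_re, Complex.one_re]
  linarith

private lemma vpv_log_div {u v : ℂ} (hu : 0 < u.re) (hv : 0 < v.re) :
    Complex.log (u / v) = Complex.log u - Complex.log v := by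
  have hu0 : u ≠ 0 := fun h => by simp [h] at hu
  have hv0 : v ≠ 0 := fun h => by simp [h] at hv
  have hau : |Complex.arg u| < Real.pi / 2 :=
    Complex.abs_arg_lt_pi_div_two_iff.mpr (Or.inl hu)
  have hav : |Complex.arg v| < Real.pi / 2 :=
    Complex.abs_arg_lt_pi_div_two_iff.mpr (Or.inl hv)
  have hpi := Real.pi_pos
  have hvpi : Complex.arg v ≠ Real.pi := by
    intro h
    rw [h] at hav
    rw [abs_of_pos hpi] at hav
    linarith
  rw [div_eq_mul_inv, Complex.log_mul hu0 (inv_ne_zero hv0), Complex.log_inv v hvpi,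
    sub_eq_add_neg]
  rw [Complex.arg_inv, if_neg hvpi]
  obtain ⟨h1, h2⟩ := abs_lt.mp hau
  obtain ⟨h3, h4⟩ := abs_lt.mp hav
  constructor <;> [linarith; linarith]

private lemma vpv_hasSum_pnat {F : ℕ → ℂ} {s : ℂ} (h : HasSum F s) (h0 : F 0 = 0) :
    HasSum (fun n : ℕ+ => F n) s := by
  have hinj : Function.Injective ((↑) : ℕ+ → ℕ) := fun a b hab => PNat.coe_injective hab
  have := (hinj.hasSum_iff (f := F) ?_).mpr h
  · exact this
  · intro x hx
    rcases Nat.eq_zero_or_pos x with rfl | hp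
    · exact h0
    · exact absurd ⟨⟨x, hp⟩, rfl⟩ hx

/-- The equivalence between coprime pairs times a positive natural and all pairs `a < b`. -/
private def vpvEquiv :
    {p : ℕ × ℕ // p.1 < p.2 ∧ Nat.gcd p.1 p.2 = 1} × ℕ+ ≃ {p : ℕ × ℕ // p.1 < p.2} where
  toFun x := ⟨((x.2 : ℕ) * x.1.1.1, (x.2 : ℕ) * x.1.1.2),
    mul_lt_mul_of_pos_left x.1.2.1 x.2.pos⟩
  invFun q := ⟨⟨(q.1.1 / Nat.gcd q.1.1 q.1.2, q.1.2 / Nat.gcd q.1.1 q.1.2), by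
      have hB : 0 < q.1.2 := lt_of_le_of_lt (Nat.zero_le _) q.2
      have hg : 0 < Nat.gcd q.1.1 q.1.2 := Nat.gcd_pos_of_pos_right _ hB
      exact ⟨Nat.div_lt_div_of_lt_of_dvd (Nat.gcd_dvd_right _ _) q.2,
        Nat.coprime_div_gcd_div_gcd hg⟩⟩,
    ⟨Nat.gcd q.1.1 q.1.2,
      Nat.gcd_pos_of_pos_right _ (lt_of_le_of_lt (Nat.zero_le _) q.2)⟩⟩
  left_inv := by
    rintro ⟨⟨⟨a, b⟩, hab, hcop⟩, n⟩
    have hg : Nat.gcd ((n : ℕ) * a) ((n : ℕ) * b) = (n : ℕ) := by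
      rw [Nat.gcd_mul_left, hcop, mul_one]
    refine Prod.ext (Subtype.ext ?_) (PNat.coe_injective ?_)
    · simp only [hg]
      exact Prod.ext (Nat.mul_div_cancel_left _ n.pos) (Nat.mul_div_cancel_left _ n.pos)
    · show Nat.gcd ((n:ℕ) * a) ((n:ℕ) * b) = (n:ℕ)
      exact hg
  right_inv := by
    rintro ⟨⟨A, B⟩, h⟩
    exact Subtype.ext (Prod.ext (Nat.mul_div_cancel' (Nat.gcd_dvd_left _ _))
      (Nat.mul_div_cancel' (Nat.gcd_dvd_right _ _)))

/-- The equivalence between `Σ b, Fin b` and pairs `a < b`. -/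
private def vpvSigmaEquiv : (Σ b : ℕ, Fin b) ≃ {p : ℕ × ℕ // p.1 < p.2} where
  toFun x := ⟨((x.2 : ℕ), x.1), x.2.isLt⟩
  invFun q := ⟨q.1.2, ⟨q.1.1, q.2⟩⟩
  left_inv := by rintro ⟨b, a⟩; rfl
  right_inv := by rintro ⟨⟨A, B⟩, h⟩; rfl


private noncomputable def vpvG (y z : ℂ) : ℕ × ℕ → ℂ := fun p => y ^ p.1 * z ^ p.2 / (p.2 : ℂ)

set_option maxHeartbeats 1600000 in
theorem vpv_hyperpyramid_log_identity (y z : ℂ) (hy : ‖y‖ < 1)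
    (hz : ‖z‖ < 1) :
    ∑' p : {p : ℕ × ℕ // p.1 < p.2 ∧ Nat.gcd p.1 p.2 = 1},
        (1 / ((p : ℕ × ℕ).2 : ℂ)) *
          (-Complex.log (1 - y ^ (p : ℕ × ℕ).1 * z ^ (p : ℕ × ℕ).2)) =
      (1 / (1 - y)) * Complex.log ((1 - y * z) / (1 - z)) := by
  have hny : ‖y‖ < 1 := hy
  have hnz : ‖z‖ < 1 := hz
  have hy1 : y ≠ 1 := by intro h; rw [h] at hy; simp at hy
  have hyz : ‖y * z‖ < 1 := by
    rw [norm_mul]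
    calc ‖y‖ * ‖z‖ ≤ 1 * ‖z‖ :=
          mul_le_mul_of_nonneg_right hy.le (norm_nonneg z)
      _ = ‖z‖ := one_mul _
      _ < 1 := hz
  have hnyz : ‖y * z‖ < 1 := hyz
  set R : ℂ := (1 / (1 - y)) * (-Complex.log (1 - z) - -Complex.log (1 - y * z)) with hRdef
  -- summability of the majorant
  have hmaj : Summable (fun p : ℕ × ℕ => ‖y‖ ^ p.1 * ‖z‖ ^ p.2) :=
    (summable_geometric_of_lt_one (norm_nonneg y) hny).mul_of_nonneg
      (summable_geometric_of_lt_one (norm_nonneg z) hnz)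
      (fun n => pow_nonneg (norm_nonneg y) n) (fun n => pow_nonneg (norm_nonneg z) n)
  have hGsub : Summable (vpvG y z ∘ ((↑) : {p : ℕ × ℕ // p.1 < p.2} → ℕ × ℕ)) := by
    apply Summable.of_norm_bounded (hmaj.subtype {p : ℕ × ℕ | p.1 < p.2})
    rintro ⟨⟨A, B⟩, hAB⟩
    show ‖y ^ A * z ^ B / ((B : ℕ) : ℂ)‖ ≤ ‖y‖ ^ A * ‖z‖ ^ B
    rw [norm_div, norm_mul, norm_pow, norm_pow]
    have hB : 0 < B := lt_of_le_of_lt (Nat.zero_le A) hAB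
    have hB1 : (1 : ℝ) ≤ ‖((B : ℕ) : ℂ)‖ := by
      rw [Complex.norm_natCast]
      exact_mod_cast hB
    exact div_le_self (by positivity) hB1
  obtain ⟨S, hS⟩ := hGsub
  -- fiberwise over the sigma decomposition
  have hfib : ∀ b : ℕ, HasSum (fun a : Fin b => (vpvG y z ∘ (↑) ∘ vpvSigmaEquiv) ⟨b, a⟩)
      ((1 / (1 - y)) * (z ^ b / (b : ℂ) - (y * z) ^ b / (b : ℂ))) := by
    intro b
    have h0 : HasSum (fun a : Fin b => y ^ (a : ℕ) * z ^ b / (b : ℂ))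
        ((1 / (1 - y)) * (z ^ b / (b : ℂ) - (y * z) ^ b / (b : ℂ))) := by
      have h1 := hasSum_fintype (fun a : Fin b => y ^ (a : ℕ) * z ^ b / (b : ℂ))
      convert h1 using 1
      rw [Fin.sum_univ_eq_sum_range (fun a : ℕ => y ^ a * z ^ b / (b : ℂ)) b,
        ← Finset.sum_div, ← Finset.sum_mul, geom_sum_eq hy1, mul_pow]
      rcases Nat.eq_zero_or_pos b with rfl | hb
      · simp
      · have hbne : ((b : ℕ) : ℂ) ≠ 0 := Nat.cast_ne_zero.mpr hb.ne'
        have hym1 : y - 1 ≠ 0 := sub_ne_zero.mpr hy1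
        have h1y : (1 : ℂ) - y ≠ 0 := sub_ne_zero.mpr (Ne.symm hy1)
        field_simp
        ring
    exact h0
  have hggR : HasSum (fun b : ℕ => (1 / (1 - y)) * (z ^ b / (b : ℂ) - (y * z) ^ b / (b : ℂ))) R := by
    have h1 : HasSum (fun n : ℕ => z ^ n / (n : ℂ)) (-Complex.log (1 - z)) :=
      Complex.hasSum_taylorSeries_neg_log hnz
    have h2 : HasSum (fun n : ℕ => (y * z) ^ n / (n : ℂ)) (-Complex.log (1 - y * z)) :=
      Complex.hasSum_taylorSeries_neg_log hnyz
    exact (h1.sub h2).mul_left _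
  have hsig : HasSum (vpvG y z ∘ (↑) ∘ vpvSigmaEquiv) S := vpvSigmaEquiv.hasSum_iff.mpr hS
  have hSR : S = R := (hsig.sigma hfib).unique hggR
  rw [hSR] at hS
  -- transfer to coprime pairs times ℕ+
  have hCe : HasSum (vpvG y z ∘ (↑) ∘ vpvEquiv) R := vpvEquiv.hasSum_iff.mpr hS
  have hfib2 : ∀ p : {p : ℕ × ℕ // p.1 < p.2 ∧ Nat.gcd p.1 p.2 = 1},
      HasSum (fun n : ℕ+ => (vpvG y z ∘ (↑) ∘ vpvEquiv) (p, n))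
        ((1 / ((p : ℕ × ℕ).2 : ℂ)) *
          (-Complex.log (1 - y ^ (p : ℕ × ℕ).1 * z ^ (p : ℕ × ℕ).2))) := by
    rintro ⟨⟨a, b⟩, hab, hcop⟩
    have hb : 0 < b := lt_of_le_of_lt (Nat.zero_le a) hab
    have hw : ‖y ^ a * z ^ b‖ < 1 := by
      rw [norm_mul, norm_pow, norm_pow]
      calc ‖y‖ ^ a * ‖z‖ ^ b ≤ 1 * ‖z‖ ^ b :=
            mul_le_mul_of_nonneg_right (pow_le_one₀ (norm_nonneg y) hny.le)
              (pow_nonneg (norm_nonneg z) b)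
        _ = ‖z‖ ^ b := one_mul _
        _ ≤ ‖z‖ ^ 1 := pow_le_pow_of_le_one (norm_nonneg z) hnz.le hb
        _ = ‖z‖ := pow_one _
        _ < 1 := hnz
    have hmain : HasSum (fun n : ℕ => (1 / (b : ℂ)) * ((y ^ a * z ^ b) ^ n / (n : ℂ)))
        ((1 / (b : ℂ)) * (-Complex.log (1 - y ^ a * z ^ b))) :=
      (Complex.hasSum_taylorSeries_neg_log hw).mul_left _
    have hpn := vpv_hasSum_pnat hmain (by simp)
    have hfun : (fun n : ℕ+ =>
          (vpvG y z ∘ (↑) ∘ vpvEquiv) (⟨⟨(a, b), hab, hcop⟩, n⟩)) =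
        fun n : ℕ+ => (1 / (b : ℂ)) * ((y ^ a * z ^ b) ^ (n : ℕ) / ((n : ℕ) : ℂ)) := by
      funext n
      show y ^ ((n : ℕ) * a) * z ^ ((n : ℕ) * b) / ((((n : ℕ) * b : ℕ)) : ℂ) =
        (1 / (b : ℂ)) * ((y ^ a * z ^ b) ^ (n : ℕ) / ((n : ℕ) : ℂ))
      rw [mul_pow, ← pow_mul, ← pow_mul, mul_comm a (n : ℕ), mul_comm b (n : ℕ), Nat.cast_mul]
      ring
    rw [hfun]
    exact hpn
  have hfinal : HasSum (fun p : {p : ℕ × ℕ // p.1 < p.2 ∧ Nat.gcd p.1 p.2 = 1} =>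
      (1 / ((p : ℕ × ℕ).2 : ℂ)) *
        (-Complex.log (1 - y ^ (p : ℕ × ℕ).1 * z ^ (p : ℕ × ℕ).2))) R :=
    hCe.prod_fiberwise hfib2
  rw [hfinal.tsum_eq, hRdef,
    vpv_log_div (vpv_re_pos hyz) (vpv_re_pos hz)]
  ring
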